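/- Binomial tail lower bound (key estimate in the proof of Theorem 4.3): let n = m·α with m ≥ 2 and α ≥ 1 naturals, and let d be a natural number with d + 1 ≤ n. Then Σ_{k=d+1}^{n} C(n,k) · (1/m)^k · (1 − 1/m)^{n−k} ≥ (1 − 1/m)^n · (α/(d+1))^{d+1}; that is, for T ~ Binomial(n, 1/m) one has P(T > d) ≥ (1 − α/n)^n · (α/(d+1))^{d+1}. -/

import Mathlib

open Finset

lemma pow_le_pow_mul_choose : ∀ (k n : ℕ), k ≤ n → n ^ k ≤ k ^ k * Nat.choose n k := by
  intro k
  induction k with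
  | zero => intro n _; simp
  | succ k ih =>
    intro n hn
    obtain ⟨m, rfl⟩ : ∃ m, n = m + 1 := ⟨n - 1, by omega⟩
    have hkm : k ≤ m := by omega
    have hid : (m + 1) * Nat.choose m k = Nat.choose (m + 1) (k + 1) * (k + 1) :=
      Nat.add_one_mul_choose_eq m k
    have ihm := ih m hkm
    -- (m+1)^k * k^k ≤ m^k * (k+1)^k
    have hcross : (m + 1) ^ k * k ^ k ≤ m ^ k * (k + 1) ^ k := by
      calc (m + 1) ^ k * k ^ k = ((m + 1) * k) ^ k := by rw [mul_pow]
        _ ≤ (m * (k + 1)) ^ k := Nat.pow_le_pow_left (by nlinarith) k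
        _ = m ^ k * (k + 1) ^ k := by rw [mul_pow]
    rcases Nat.eq_zero_or_pos k with rfl | hk
    · simpa using Nat.one_le_iff_ne_zero.mpr (by
        have := Nat.choose_pos (show 1 ≤ m + 1 by omega)
        omega)
    · have h1 : (m + 1) ^ k ≤ (k + 1) ^ k * Nat.choose m k := by
        have h2 : (m + 1) ^ k * k ^ k ≤ (k + 1) ^ k * Nat.choose m k * k ^ k := by
          calc (m + 1) ^ k * k ^ k ≤ m ^ k * (k + 1) ^ k := hcross
            _ ≤ (k ^ k * Nat.choose m k) * (k + 1) ^ k := Nat.mul_le_mul_right _ ihm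
            _ = (k + 1) ^ k * Nat.choose m k * k ^ k := by ring
        exact Nat.le_of_mul_le_mul_right h2 (Nat.pow_pos hk)
      calc (m + 1) ^ (k + 1) = (m + 1) ^ k * (m + 1) := by ring
        _ ≤ ((k + 1) ^ k * Nat.choose m k) * (m + 1) := Nat.mul_le_mul_right _ h1
        _ = (k + 1) ^ k * ((m + 1) * Nat.choose m k) := by ring
        _ = (k + 1) ^ k * (Nat.choose (m + 1) (k + 1) * (k + 1)) := by rw [hid]
        _ = (k + 1) ^ (k + 1) * Nat.choose (m + 1) (k + 1) := by ring

/-- **Binomial tail lower bound** (key estimate in the proof of Theorem 4.3): for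
`n = m·α` with `m ≥ 2`, `α ≥ 1` and `d + 1 ≤ n`, the upper tail `P(T > d)` of a
`Binomial(n, 1/m)` variable `T` is at least `(1 − 1/m)^n · (α/(d+1))^(d+1)`. -/
theorem binomial_tail_lower_bound (m α d : ℕ) (hm : 2 ≤ m) (hα : 1 ≤ α)
    (hd : d + 1 ≤ m * α) :
    (∑ k ∈ Finset.Icc (d + 1) (m * α),
        (Nat.choose (m * α) k : ℝ) * (1 / m) ^ k * (1 - 1 / m) ^ (m * α - k))
      ≥ (1 - 1 / (m : ℝ)) ^ (m * α) * ((α : ℝ) / (d + 1)) ^ (d + 1) := by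
  set n := m * α with hn
  have hm0 : (0 : ℝ) < m := by positivity
  have hq0 : (0 : ℝ) ≤ 1 - 1 / m := by
    rw [sub_nonneg, div_le_one hm0]; exact_mod_cast by omega
  have hq1 : (1 : ℝ) - 1 / m ≤ 1 := by
    have : (0:ℝ) ≤ 1 / m := by positivity
    linarith
  -- sum ≥ single term at d+1
  have hmem : d + 1 ∈ Finset.Icc (d + 1) n := by simp [hd]
  have hsum : (∑ k ∈ Finset.Icc (d + 1) n,
      (Nat.choose n k : ℝ) * (1 / m) ^ k * (1 - 1 / m) ^ (n - k))
      ≥ (Nat.choose n (d + 1) : ℝ) * (1 / m) ^ (d + 1) * (1 - 1 / m) ^ (n - (d + 1)) := by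
    apply Finset.single_le_sum (f := fun k =>
      (Nat.choose n k : ℝ) * (1 / m) ^ k * (1 - 1 / m) ^ (n - k)) _ hmem
    intro i _
    positivity
  refine le_trans ?_ hsum
  -- key: (α/(d+1))^(d+1) ≤ C(n,d+1) * (1/m)^(d+1)
  have hkey : ((α : ℝ) / (d + 1)) ^ (d + 1) ≤ (Nat.choose n (d + 1) : ℝ) * (1 / m) ^ (d + 1) := by
    have hnat := pow_le_pow_mul_choose (d + 1) n hd
    have hnatR : (n : ℝ) ^ (d + 1) ≤ ((d : ℝ) + 1) ^ (d + 1) * Nat.choose n (d + 1) := by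
      exact_mod_cast hnat
    have hd1 : (0 : ℝ) < (d : ℝ) + 1 := by positivity
    have hαd : (α : ℝ) / (d + 1) = (n : ℝ) / ((d + 1) * m) := by
      rw [hn]; push_cast
      field_simp
    rw [hαd, div_pow, mul_pow]
    rw [div_le_iff₀ (by positivity)]
    calc (n : ℝ) ^ (d + 1) ≤ ((d : ℝ) + 1) ^ (d + 1) * Nat.choose n (d + 1) := hnatR
      _ = (Nat.choose n (d+1) : ℝ) * (1 / m) ^ (d+1) * (((d:ℝ)+1) ^ (d+1) * (m:ℝ) ^ (d+1)) := by
        rw [div_pow, one_pow]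
        field_simp
  -- and (1-1/m)^n ≤ (1-1/m)^(n-(d+1))
  have hpow : (1 - 1 / (m : ℝ)) ^ n ≤ (1 - 1 / (m : ℝ)) ^ (n - (d + 1)) :=
    pow_le_pow_of_le_one hq0 hq1 (by omega)
  calc (1 - 1 / (m : ℝ)) ^ n * ((α : ℝ) / (d + 1)) ^ (d + 1)
      ≤ (1 - 1 / (m : ℝ)) ^ (n - (d + 1)) * ((Nat.choose n (d + 1) : ℝ) * (1 / m) ^ (d + 1)) :=
        mul_le_mul hpow hkey (by positivity) (by positivity)
    _ = (Nat.choose n (d + 1) : ℝ) * (1 / m) ^ (d + 1) * (1 - 1 / m) ^ (n - (d + 1)) := by ring
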